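/- Let w ∈ S_n be a prism with a letter i ∈ supp(w) unconfined in every reduced word of w, and suppose i+1 ∉ supp(w). Then either (w(i+1) = i and the value i+1 occurs among w(1),…,w(i)), or (w(i) = i+1 and w(i+1) ≤ i). (These two alternatives are the one-line-notation renderings of the two calibrated mesh patterns of the proposition.) -/

import Mathlib

/-- The adjacent transposition `σ_i`, swapping `i` and `i+1` (acting on `ℕ`). -/
def sigmaT (i : ℕ) : Equiv.Perm ℕ := Equiv.swap i (i + 1)

/-- The permutation given by a word (product of simple reflections, composed as functions). -/
def wordProd (s : List ℕ) : Equiv.Perm ℕ := (s.map sigmaT).prod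

/-- `s` is a word for `w` in `S_n`: all letters lie in `{1,…,n-1}` and the product is `w`. -/
def IsWord (n : ℕ) (w : Equiv.Perm ℕ) (s : List ℕ) : Prop :=
  (∀ j ∈ s, 1 ≤ j ∧ j ≤ n - 1) ∧ wordProd s = w

/-- `s` is a reduced word for `w`: a word of minimal length. -/
def IsReducedWord (n : ℕ) (w : Equiv.Perm ℕ) (s : List ℕ) : Prop :=
  IsWord n w s ∧ ∀ t : List ℕ, IsWord n w t → s.length ≤ t.length

/-- The Coxeter length `ℓ(w)`. -/
noncomputable def ell (n : ℕ) (w : Equiv.Perm ℕ) : ℕ :=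
  sInf {k | ∃ s : List ℕ, IsWord n w s ∧ s.length = k}

/-- The support of `w`: letters appearing in reduced words of `w`. -/
def supp (n : ℕ) (w : Equiv.Perm ℕ) : Set ℕ :=
  {i | ∃ s : List ℕ, IsReducedWord n w s ∧ i ∈ s}

/-- Bruhat order: some reduced word of `v` is a subsequence of some reduced word of `w`. -/
def BruhatLE (n : ℕ) (v w : Equiv.Perm ℕ) : Prop :=
  ∃ s t : List ℕ, IsReducedWord n v s ∧ IsReducedWord n w t ∧ s.Sublist t

/-- The principal order ideal `B(w)`, as a type. -/
def IdealB (n : ℕ) (w : Equiv.Perm ℕ) : Type := {v : Equiv.Perm ℕ // BruhatLE n v w}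

/-- The Bruhat order restricted to `B(w)`. -/
def IdealLE (n : ℕ) (w : Equiv.Perm ℕ) (a b : IdealB n w) : Prop := BruhatLE n a.1 b.1

/-- Two relations are isomorphic (order isomorphism of the corresponding ordered sets). -/
def RelIsomorphic {α β : Type*} (ra : α → α → Prop) (rb : β → β → Prop) : Prop :=
  ∃ e : α ≃ β, ∀ a b : α, ra a b ↔ rb (e a) (e b)

/-- `w` is a prism: `B(w) ≅ C₂ × X` for some partially ordered set `X`
(the two-element chain `C₂` realized as `Bool`), with the componentwise order. -/
def IsPrism (n : ℕ) (w : Equiv.Perm ℕ) : Prop :=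
  ∃ (X : Type) (rX : X → X → Prop), IsPartialOrder X rX ∧
    RelIsomorphic (IdealLE n w)
      (fun p q : Bool × X => (p.1 ≤ q.1) ∧ rX p.2 q.2)

/-- `w` belongs to `S_n`: it fixes every point outside `{1,…,n}`. -/
def MemSymm (n : ℕ) (w : Equiv.Perm ℕ) : Prop :=
  ∀ x : ℕ, x ∉ Set.Icc 1 n → w x = x

/-- `i` is unconfined in the word `s`: it appears exactly once, not between two copies
of `i+1` and not between two copies of `i-1`. -/
def Unconfined (i : ℕ) (s : List ℕ) : Prop :=
  s.count i = 1 ∧ ∀ a b : List ℕ, s = a ++ i :: b →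
    ¬((i + 1) ∈ a ∧ (i + 1) ∈ b) ∧ ¬((i - 1) ∈ a ∧ (i - 1) ∈ b)

/-- `B(w) ≅ C₂ × B(v)` with the componentwise order. -/
def IsoC2TimesIdeal (n : ℕ) (w v : Equiv.Perm ℕ) : Prop :=
  RelIsomorphic (IdealLE n w)
    (fun p q : Bool × IdealB n v => (p.1 ≤ q.1) ∧ IdealLE n v p.2 q.2)

lemma sigmaT_fix {j x : ℕ} (h1 : x ≠ j) (h2 : x ≠ j + 1) : sigmaT j x = x :=
  Equiv.swap_apply_of_ne_of_ne h1 h2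

lemma wordProd_cons (j : ℕ) (t : List ℕ) : wordProd (j :: t) = sigmaT j * wordProd t := by
  simp [wordProd]

lemma wordProd_append (s t : List ℕ) : wordProd (s ++ t) = wordProd s * wordProd t := by
  simp [wordProd]

lemma wordProd_fix (t : List ℕ) (x : ℕ) (h : ∀ j ∈ t, x ≠ j ∧ x ≠ j + 1) :
    wordProd t x = x := by
  induction t with
  | nil => simp [wordProd]
  | cons j t ih =>
    rw [wordProd_cons, Equiv.Perm.mul_apply, ih (fun k hk => h k (List.mem_cons_of_mem _ hk))]
    exact sigmaT_fix (h j (List.mem_cons_self)).1 (h j (List.mem_cons_self)).2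

lemma wordProd_mem_Icc {i : ℕ} (t : List ℕ) (ht : ∀ j ∈ t, 1 ≤ j ∧ j ≠ i) (x : ℕ)
    (hx1 : 1 ≤ x) (hx2 : x ≤ i) : 1 ≤ wordProd t x ∧ wordProd t x ≤ i := by
  induction t with
  | nil => simp [wordProd]; omega
  | cons j t ih =>
    rw [wordProd_cons, Equiv.Perm.mul_apply]
    obtain ⟨hy1, hy2⟩ := ih (fun k hk => ht k (List.mem_cons_of_mem _ hk))
    obtain ⟨hj1, hji⟩ := ht j (List.mem_cons_self)
    rcases eq_or_ne (wordProd t x) j with h | h1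
    · rw [h, sigmaT, Equiv.swap_apply_left]; omega
    rcases eq_or_ne (wordProd t x) (j + 1) with h | h2
    · rw [h, sigmaT, Equiv.swap_apply_right]; omega
    · rw [sigmaT_fix h1 h2]; omega

lemma wordProd_reverse (t : List ℕ) : wordProd t.reverse = (wordProd t)⁻¹ := by
  induction t with
  | nil => simp [wordProd]
  | cons j t ih =>
    rw [wordProd_cons, mul_inv_rev, List.reverse_cons, wordProd_append, ih]
    simp [wordProd, sigmaT]

/-- a prism with unconfined i and i+1 ∉ supp(w) contains one of the two
calibrated patterns (one-line-notation rendering). -/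
theorem prism_incomplete_support_above (n : ℕ) (w : Equiv.Perm ℕ) (hw : MemSymm n w) (i : ℕ)
    (hprism : IsPrism n w) (hi : i ∈ supp n w)
    (hu : ∀ s : List ℕ, IsReducedWord n w s → Unconfined i s)
    (hmiss : i + 1 ∉ supp n w) :
    (w (i + 1) = i ∧ ∃ x : ℕ, 1 ≤ x ∧ x ≤ i ∧ w x = i + 1) ∨
    (w i = i + 1 ∧ w (i + 1) ≤ i) := by
  obtain ⟨s, hred, his⟩ := hi
  obtain ⟨hcount, hsand⟩ := hu s hred
  have hlet := hred.1.1
  have hprod := hred.1.2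
  have hip1 : (i + 1) ∉ s := fun h => hmiss ⟨s, hred, h⟩
  obtain ⟨a, b, hs⟩ := List.append_of_mem his
  have hca : a.count i = 0 ∧ b.count i = 0 := by
    rw [hs, List.count_append, List.count_cons_self] at hcount; omega
  have hia : i ∉ a := List.count_eq_zero.mp hca.1
  have hib : i ∉ b := List.count_eq_zero.mp hca.2
  have hi1 : 1 ≤ i := (hlet i his).1
  have hmema : ∀ j ∈ a, j ∈ s := by
    intro j hj; rw [hs]; exact List.mem_append_left _ hj
  have hmemb : ∀ j ∈ b, j ∈ s := by
    intro j hj; rw [hs]; exact List.mem_append_right _ (List.mem_cons_of_mem _ hj)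
  have hfa : ∀ j ∈ a, 1 ≤ j ∧ j ≠ i ∧ j ≠ i + 1 := fun j hj =>
    ⟨(hlet j (hmema j hj)).1, fun h => hia (h ▸ hj), fun h => hip1 (h ▸ hmema j hj)⟩
  have hfb : ∀ j ∈ b, 1 ≤ j ∧ j ≠ i ∧ j ≠ i + 1 := fun j hj =>
    ⟨(hlet j (hmemb j hj)).1, fun h => hib (h ▸ hj), fun h => hip1 (h ▸ hmemb j hj)⟩
  have hdecomp : ∀ x, w x = wordProd a (sigmaT i (wordProd b x)) := by
    intro x
    rw [← hprod, hs, wordProd_append, wordProd_cons]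
    simp [Equiv.Perm.mul_apply]
  have hAip1 : wordProd a (i + 1) = i + 1 := wordProd_fix a (i + 1) (fun j hj => by
    obtain ⟨h1, h2, h3⟩ := hfa j hj; omega)
  have hBip1 : wordProd b (i + 1) = i + 1 := wordProd_fix b (i + 1) (fun j hj => by
    obtain ⟨h1, h2, h3⟩ := hfb j hj; omega)
  by_cases hb : (i - 1) ∈ b
  · -- i-1 ∈ b, so i-1 ∉ a : first disjunct
    have hna : (i - 1) ∉ a := fun h => (hsand a b hs).2 ⟨h, hb⟩
    have hAi : wordProd a i = i := wordProd_fix a i (fun j hj => by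
      obtain ⟨h1, h2, h3⟩ := hfa j hj
      have h4 : j ≠ i - 1 := fun h => hna (h ▸ hj)
      omega)
    left
    constructor
    · rw [hdecomp, hBip1]
      simp only [sigmaT, Equiv.swap_apply_right]
      exact hAi
    · refine ⟨wordProd b.reverse i, ?_, ?_, ?_⟩
      · exact (wordProd_mem_Icc b.reverse (fun j hj => by
          obtain ⟨h1, h2, h3⟩ := hfb j (List.mem_reverse.mp hj); exact ⟨h1, h2⟩) i hi1 le_rfl).1
      · exact (wordProd_mem_Icc b.reverse (fun j hj => by
          obtain ⟨h1, h2, h3⟩ := hfb j (List.mem_reverse.mp hj); exact ⟨h1, h2⟩) i hi1 le_rfl).2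
      · rw [hdecomp]
        have hBB : wordProd b (wordProd b.reverse i) = i := by
          rw [wordProd_reverse]; simp
        rw [hBB]
        simp only [sigmaT, Equiv.swap_apply_left]
        exact hAip1
  · -- i-1 ∉ b : second disjunct
    have hBi : wordProd b i = i := wordProd_fix b i (fun j hj => by
      obtain ⟨h1, h2, h3⟩ := hfb j hj
      have h4 : j ≠ i - 1 := fun h => hb (h ▸ hj)
      omega)
    right
    constructor
    · rw [hdecomp, hBi]
      simp only [sigmaT, Equiv.swap_apply_left]
      exact hAip1
    · rw [hdecomp, hBip1]
      simp only [sigmaT, Equiv.swap_apply_right]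
      exact (wordProd_mem_Icc a (fun j hj => by
        obtain ⟨h1, h2, h3⟩ := hfa j hj; exact ⟨h1, h2⟩) i hi1 le_rfl).2
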